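/- The set { Σ_{i : Fin n} R i : R : Fin n → ℝ satisfies the pairwise property } has a least element, and this least element equals the minimum, over all j : Fin n and all p : Fin n → Fin n that are arborescences toward j, of the tree cost H[X j] + Σ_{i ≠ j} H[X i | X (p i)]. (The minimum over the finitely many pairs (j, p) exists; e.g. the constant map p ≡ j is an arborescence toward j.) -/

import Mathlib

open MeasureTheory ProbabilityTheory

/-- Shannon entropy (in nats) of a random variable. -/
noncomputable def shEntropy {Ω : Type*} [MeasurableSpace Ω] {S : Type*}
    (μ : Measure Ω) (X : Ω → S) : ℝ :=
  ∑' x : S, Real.negMulLog (μ (X ⁻¹' {x})).toReal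

/-- Conditional Shannon entropy `H[X | Y]`. -/
noncomputable def shCondEntropy {Ω : Type*} [MeasurableSpace Ω] {S T : Type*}
    (μ : Measure Ω) (X : Ω → S) (Y : Ω → T) : ℝ :=
  ∑' y : T, (μ (Y ⁻¹' {y})).toReal * shEntropy (ProbabilityTheory.cond μ (Y ⁻¹' {y})) X

/-- The pairwise property of a rate assignment `R`: for each source `X i` there is an
ordered sequence of sources `X (s 1), …, X (s k)` with `R (s 1) ≥ H[X (s 1)]`,
`R (s j) ≥ H[X (s j) | X (s (j-1))]` for `2 ≤ j ≤ k`, and `R i ≥ H[X i | X (s k)]`. -/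
def PairwiseProperty {Ω S : Type*} [MeasurableSpace Ω] {n : ℕ}
    (μ : Measure Ω) (X : Fin n → Ω → S) (R : Fin n → ℝ) : Prop :=
  ∀ i : Fin n, ∃ (k : ℕ) (s : ℕ → Fin n), 1 ≤ k ∧
    R (s 1) ≥ shEntropy μ (X (s 1)) ∧
    (∀ j : ℕ, 2 ≤ j → j ≤ k → R (s j) ≥ shCondEntropy μ (X (s j)) (X (s (j - 1)))) ∧
    R i ≥ shCondEntropy μ (X i) (X (s k))

/-- The decoding relation of a rate assignment: `a` can help decode `b` if
`H[X b | X a] ≤ R b`. -/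
def decRel {Ω S : Type*} [MeasurableSpace Ω] {n : ℕ}
    (μ : Measure Ω) (X : Fin n → Ω → S) (R : Fin n → ℝ) : Fin n → Fin n → Prop :=
  fun a b => shCondEntropy μ (X b) (X a) ≤ R b

/-- `p` is an arborescence toward the root `j`: iterating `p` from any node reaches `j`. -/
def IsArborescence {n : ℕ} (j : Fin n) (p : Fin n → Fin n) : Prop :=
  ∀ i : Fin n, ∃ m : ℕ, p^[m] i = j

/-- The tree rate assignment associated with a root `j` and parent map `p`. -/
noncomputable def treeRate {Ω S : Type*} [MeasurableSpace Ω] {n : ℕ}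
    (μ : Measure Ω) (X : Fin n → Ω → S) (j : Fin n) (p : Fin n → Fin n) : Fin n → ℝ :=
  fun i => if i = j then shEntropy μ (X j) else shCondEntropy μ (X i) (X (p i))

/-- The cost (sum rate) of the tree rate assignment with root `j` and parent map `p`. -/
noncomputable def treeCost {Ω S : Type*} [MeasurableSpace Ω] {n : ℕ}
    (μ : Measure Ω) (X : Fin n → Ω → S) (j : Fin n) (p : Fin n → Fin n) : ℝ :=
  shEntropy μ (X j) + ∑ i ∈ Finset.univ.erase j, shCondEntropy μ (X i) (X (p i))


set_option linter.unusedSectionVars false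
open scoped ENNReal

section Aux
variable {Ω S T : Type*} [MeasurableSpace Ω] {μ : Measure Ω}

lemma preimage_singleton_eq_empty' {X : Ω → S} {x : S} (hx : x ∉ Set.range X) :
    X ⁻¹' {x} = ∅ := by
  ext ω; simp only [Set.mem_preimage, Set.mem_singleton_iff, Set.mem_empty_iff_false,
    iff_false]
  exact fun h => hx ⟨ω, h⟩

lemma shEntropy_eq_sum (μ : Measure Ω) (X : Ω → S) (h : (Set.range X).Finite) :
    shEntropy μ X = ∑ x ∈ h.toFinset, Real.negMulLog (μ (X ⁻¹' {x})).toReal := by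
  refine tsum_eq_sum ?_
  intro x hx
  rw [preimage_singleton_eq_empty' (by simpa [h.mem_toFinset] using hx)]
  simp

lemma shEntropy_nonneg (hμ : ∀ A : Set Ω, μ A ≤ 1) (X : Ω → S) : 0 ≤ shEntropy μ X := by
  refine tsum_nonneg fun x => Real.negMulLog_nonneg ENNReal.toReal_nonneg ?_
  simpa using ENNReal.toReal_mono ENNReal.one_ne_top (hμ (X ⁻¹' {x}))

lemma cond_le_one [IsProbabilityMeasure μ] {A : Set Ω} (hA : MeasurableSet A) (B : Set Ω) :
    μ[B | A] ≤ 1 := by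
  rw [cond_apply hA]
  rcases eq_or_ne (μ A) 0 with h | h
  · have : μ (A ∩ B) = 0 := le_antisymm (h ▸ measure_mono Set.inter_subset_left) zero_le
    simp [this]
  · calc (μ A)⁻¹ * μ (A ∩ B) ≤ (μ A)⁻¹ * μ A :=
          mul_le_mul_right (measure_mono Set.inter_subset_left) _
      _ = 1 := ENNReal.inv_mul_cancel h (measure_ne_top μ A)

lemma shCondEntropy_nonneg [IsProbabilityMeasure μ] [MeasurableSpace T]
    [MeasurableSingletonClass T] {Y : Ω → T} (hY : Measurable Y)
    (X : Ω → S) : 0 ≤ shCondEntropy μ X Y := by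
  refine tsum_nonneg fun y => mul_nonneg ENNReal.toReal_nonneg ?_
  exact shEntropy_nonneg (fun A => cond_le_one (hY (measurableSet_singleton y)) A) X

lemma shCondEntropy_self [IsProbabilityMeasure μ] [MeasurableSpace S]
    [MeasurableSingletonClass S] {X : Ω → S} (hX : Measurable X) :
    shCondEntropy μ X X = 0 := by
  have : ∀ y : S, (μ (X ⁻¹' {y})).toReal *
      shEntropy (μ[|X ⁻¹' {y}]) X = 0 := by
    intro y
    rcases eq_or_ne (μ (X ⁻¹' {y})) 0 with h | h
    · simp [h]
    · have hA : MeasurableSet (X ⁻¹' {y}) := hX (measurableSet_singleton y)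
      have : shEntropy (μ[|X ⁻¹' {y}]) X = 0 := by
        have hz : ∀ x : S, Real.negMulLog ((μ[|X ⁻¹' {y}]) (X ⁻¹' {x})).toReal = 0 := by
          intro x
          rcases eq_or_ne x y with rfl | hxy
          · rw [cond_apply hA, Set.inter_self,
              ENNReal.inv_mul_cancel h (measure_ne_top μ _)]
            simp
          · have : X ⁻¹' {y} ∩ X ⁻¹' {x} = ∅ := by
              ext ω; simp only [Set.mem_inter_iff, Set.mem_preimage, Set.mem_singleton_iff,
                Set.mem_empty_iff_false, iff_false, not_and]
              rintro rfl h2; exact hxy (h2.symm ▸ rfl)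
            rw [cond_apply hA, this]
            simp
        rw [shEntropy, tsum_congr hz, tsum_zero]
      rw [this, mul_zero]
  rw [shCondEntropy, tsum_congr this, tsum_zero]

end Aux

section Key
variable {Ω S T : Type*} [MeasurableSpace Ω] {μ : Measure Ω}
  [MeasurableSpace S] [MeasurableSingletonClass S]
  [MeasurableSpace T] [MeasurableSingletonClass T]

lemma sum_meas_preimage_inter [IsFiniteMeasure μ] {Y : Ω → T} (hY : Measurable Y)
    (hfY : (Set.range Y).Finite) {B : Set Ω} (hB : MeasurableSet B) :
    ∑ y ∈ hfY.toFinset, (μ (Y ⁻¹' {y} ∩ B)).toReal = (μ B).toReal := by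
  rw [← ENNReal.toReal_sum (fun y _ => measure_ne_top μ _)]
  congr 1
  have hd : (↑hfY.toFinset : Set T).PairwiseDisjoint (fun y => Y ⁻¹' {y} ∩ B) := by
    intro a _ b _ hab
    refine Set.disjoint_left.mpr ?_
    rintro ω ⟨ha, -⟩ ⟨hb, -⟩
    exact hab (by rw [← ha, ← hb])
  rw [← measure_biUnion_finset hd
    (fun y _ => (hY (measurableSet_singleton y)).inter hB)]
  congr 1
  ext ω
  simp only [Set.mem_iUnion, Set.mem_inter_iff, Set.mem_preimage, Set.mem_singleton_iff,
    exists_prop]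
  constructor
  · rintro ⟨y, -, -, h⟩; exact h
  · intro h; exact ⟨Y ω, by simp [hfY.mem_toFinset], rfl, h⟩

lemma weight_mul_cond_eq [IsFiniteMeasure μ] {Y : Ω → T} (hY : Measurable Y) (y : T) {B : Set Ω} :
    (μ (Y ⁻¹' {y})).toReal * ((μ[|Y ⁻¹' {y}]) B).toReal = (μ (Y ⁻¹' {y} ∩ B)).toReal := by
  set A := Y ⁻¹' {y}
  have hA : MeasurableSet A := hY (measurableSet_singleton y)
  rcases eq_or_ne (μ A) 0 with h | h
  · have : μ (A ∩ B) = 0 := le_antisymm (h ▸ measure_mono Set.inter_subset_left) zero_le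
    simp [h, this]
  · rcases eq_or_ne (μ A) ∞ with h' | h'
    · exact absurd h' (measure_ne_top μ A)
    · rw [cond_apply hA, ENNReal.toReal_mul, ENNReal.toReal_inv]
      rw [← mul_assoc, mul_inv_cancel₀ (by
        simpa [ENNReal.toReal_eq_zero_iff, h'] using h), one_mul]

lemma shCondEntropy_le_shEntropy [IsProbabilityMeasure μ] {X : Ω → S} {Y : Ω → T}
    (hX : Measurable X) (hY : Measurable Y)
    (hfX : (Set.range X).Finite) (hfY : (Set.range Y).Finite) :
    shCondEntropy μ X Y ≤ shEntropy μ X := by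
  have hstep1 : shCondEntropy μ X Y = ∑ y ∈ hfY.toFinset,
      ∑ x ∈ hfX.toFinset, (μ (Y ⁻¹' {y})).toReal *
        Real.negMulLog (((μ[|Y ⁻¹' {y}]) (X ⁻¹' {x})).toReal) := by
    rw [shCondEntropy]
    rw [tsum_eq_sum (s := hfY.toFinset) (fun y hy => by
      rw [preimage_singleton_eq_empty' (by simpa [hfY.mem_toFinset] using hy)]
      simp)]
    refine Finset.sum_congr rfl fun y _ => ?_
    rw [shEntropy_eq_sum _ _ hfX, Finset.mul_sum]
  rw [hstep1, Finset.sum_comm, shEntropy_eq_sum _ _ hfX]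
  refine Finset.sum_le_sum fun x _ => ?_
  have hw : ∀ y ∈ hfY.toFinset, (0:ℝ) ≤ (μ (Y ⁻¹' {y})).toReal :=
    fun y _ => ENNReal.toReal_nonneg
  have hw1 : ∑ y ∈ hfY.toFinset, (μ (Y ⁻¹' {y})).toReal = 1 := by
    have := sum_meas_preimage_inter (μ := μ) hY hfY MeasurableSet.univ
    simpa using this
  have hmem : ∀ y ∈ hfY.toFinset,
      ((μ[|Y ⁻¹' {y}]) (X ⁻¹' {x})).toReal ∈ Set.Ici (0:ℝ) :=
    fun y _ => ENNReal.toReal_nonneg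
  have hjen := Real.concaveOn_negMulLog.le_map_sum hw hw1 hmem
  simp only [smul_eq_mul] at hjen
  refine hjen.trans_eq ?_
  congr 1
  rw [Finset.sum_congr rfl (fun y _ => weight_mul_cond_eq (μ := μ) hY y)]
  exact sum_meas_preimage_inter hY hfY (hX (measurableSet_singleton x))

end Key

section Main

variable {Ω S : Type*} [MeasurableSpace Ω] [MeasurableSpace S] [MeasurableSingletonClass S]

lemma sum_treeRate (μ : Measure Ω) {n : ℕ} (X : Fin n → Ω → S) (j : Fin n)
    (p : Fin n → Fin n) : ∑ i, treeRate μ X j p i = treeCost μ X j p := by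
  rw [treeCost, ← Finset.add_sum_erase Finset.univ (treeRate μ X j p) (Finset.mem_univ j)]
  congr 1
  · simp [treeRate]
  · exact Finset.sum_congr rfl fun i hi => by
      simp [treeRate, (Finset.mem_erase.mp hi).1]

lemma pairwise_treeRate (μ : Measure Ω) [IsProbabilityMeasure μ] {n : ℕ}
    (X : Fin n → Ω → S) (hX : ∀ i, Measurable (X i)) {j : Fin n} {p : Fin n → Fin n}
    (hp : IsArborescence j p) : PairwiseProperty μ X (treeRate μ X j p) := by
  classical
  intro i
  by_cases hij : i = j
  · subst hij
    refine ⟨1, fun _ => i, le_refl 1, ?_, ?_, ?_⟩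
    · simp [treeRate]
    · intro t h2 h1; omega
    · rw [shCondEntropy_self (hX i)]
      simp only [treeRate, if_pos rfl, ge_iff_le]
      exact shEntropy_nonneg (fun A => prob_le_one) _
  · have hex := hp i
    have hspec : p^[Nat.find hex] i = j := Nat.find_spec hex
    have hmin : ∀ m, m < Nat.find hex → p^[m] i ≠ j := fun m hm => Nat.find_min hex hm
    set k := Nat.find hex with hk
    have hk1 : 1 ≤ k := by
      rcases Nat.eq_zero_or_pos k with h0 | h
      · exact absurd hspec (by simpa [h0] using hij)
      · exact h
    refine ⟨k, fun t => p^[k + 1 - t] i, hk1, ?_, ?_, ?_⟩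
    · show treeRate μ X j p (p^[k + 1 - 1] i) ≥ shEntropy μ (X (p^[k + 1 - 1] i))
      have h1 : k + 1 - 1 = k := by omega
      rw [h1, hspec]
      simp [treeRate]
    · intro t h2 hk'
      have hne : p^[k+1-t] i ≠ j := hmin _ (by omega)
      have harr : k + 1 - (t-1) = (k + 1 - t) + 1 := by omega
      show treeRate μ X j p (p^[k + 1 - t] i) ≥
        shCondEntropy μ (X (p^[k + 1 - t] i)) (X (p^[k + 1 - (t - 1)] i))
      rw [harr, Function.iterate_succ_apply']
      simp only [treeRate, if_neg hne, ge_iff_le, le_refl]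
    · show treeRate μ X j p i ≥ shCondEntropy μ (X i) (X (p^[k + 1 - k] i))
      have h1 : k + 1 - k = 1 := by omega
      rw [h1]
      simp only [treeRate, if_neg hij, Function.iterate_one, ge_iff_le, le_refl]

lemma exists_arb_le (μ : Measure Ω) [IsProbabilityMeasure μ] {n : ℕ} (hn : 1 ≤ n)
    (X : Fin n → Ω → S) (hX : ∀ i, Measurable (X i)) (hfin : ∀ i, (Set.range (X i)).Finite)
    (R : Fin n → ℝ) (hR : PairwiseProperty μ X R) :
    ∃ (j : Fin n) (p : Fin n → Fin n), IsArborescence j p ∧ treeCost μ X j p ≤ ∑ i, R i := by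
  classical
  obtain ⟨k0, s0, hk0, hj, -, -⟩ := hR ⟨0, hn⟩
  set j := s0 1 with hjdef
  have hreach : ∀ i : Fin n, ∃ m : ℕ, ∃ c : ℕ → Fin n, c 0 = j ∧ c m = i ∧
      ∀ t, t < m → shCondEntropy μ (X (c (t+1))) (X (c t)) ≤ R (c (t+1)) := by
    intro i
    obtain ⟨k, s, hk1, hs1, hmid, hlast⟩ := hR i
    refine ⟨k + 1, fun t => if t = 0 then j else if t ≤ k then s t else i, by simp, ?_, ?_⟩
    · simp only [if_neg (Nat.succ_ne_zero k), if_neg (by omega : ¬ k + 1 ≤ k)]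
    · intro t ht
      by_cases h0 : t = 0
      · subst h0
        simp only [if_pos rfl, if_neg one_ne_zero, if_pos hk1]
        calc shCondEntropy μ (X (s 1)) (X j) ≤ shEntropy μ (X (s 1)) :=
              shCondEntropy_le_shEntropy (hX _) (hX _) (hfin _) (hfin _)
          _ ≤ R (s 1) := hs1
      · by_cases hkt : t = k
        · subst hkt
          simp only [if_neg h0, if_pos (le_refl t), if_neg (Nat.succ_ne_zero t),
            if_neg (by omega : ¬ t + 1 ≤ t)]
          exact hlast
        · have htk : t < k := by omega
          simp only [if_neg h0, if_pos (by omega : t ≤ k),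
            if_neg (Nat.succ_ne_zero t), if_pos (by omega : t + 1 ≤ k)]
          have := hmid (t+1) (by omega) (by omega)
          simpa using this
  let d : Fin n → ℕ := fun i => Nat.find (hreach i)
  choose c hc0 hce0 hcs0 using fun i => Nat.find_spec (hreach i)
  have hce : ∀ i : Fin n, c i (d i) = i := hce0
  have hcs : ∀ i : Fin n, ∀ t, t < d i →
      shCondEntropy μ (X (c i (t+1))) (X (c i t)) ≤ R (c i (t+1)) := hcs0
  have hipos : ∀ i : Fin n, i ≠ j → 1 ≤ d i := by
    intro i hij
    by_contra h
    have h0 : d i = 0 := by omega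
    have h2 := hce i
    rw [h0, hc0 i] at h2
    exact hij h2.symm
  let p : Fin n → Fin n := fun i => if i = j then j else c i (d i - 1)
  have hedge : ∀ i : Fin n, i ≠ j → shCondEntropy μ (X i) (X (p i)) ≤ R i := by
    intro i hij
    have h1 := hipos i hij
    have h2 := hcs i (d i - 1) (by omega)
    rw [(by omega : d i - 1 + 1 = d i), hce i] at h2
    simpa [p, if_neg hij] using h2
  have hdp : ∀ i : Fin n, i ≠ j → d (c i (d i - 1)) < d i := by
    intro i hij
    have h1 := hipos i hij
    have h2 : d (c i (d i - 1)) ≤ d i - 1 :=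
      Nat.find_le ⟨c i, hc0 i, rfl, fun t ht => hcs i t (by omega)⟩
    omega
  have harb : IsArborescence j p := by
    have key : ∀ N, ∀ i : Fin n, d i ≤ N → ∃ m, p^[m] i = j := by
      intro N
      induction N with
      | zero =>
        intro i h
        by_cases hij : i = j
        · exact ⟨0, hij⟩
        · exact absurd h (by have := hipos i hij; omega)
      | succ N ih =>
        intro i h
        by_cases hij : i = j
        · exact ⟨0, hij⟩
        · obtain ⟨m, hm⟩ := ih (c i (d i - 1)) (by have := hdp i hij; omega)
          refine ⟨m + 1, ?_⟩
          rw [Function.iterate_succ_apply]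
          have hpi : p i = c i (d i - 1) := if_neg hij
          rw [hpi]
          exact hm
    exact fun i => key (d i) i le_rfl
  refine ⟨j, p, harb, ?_⟩
  rw [treeCost, ← Finset.add_sum_erase Finset.univ R (Finset.mem_univ j)]
  exact add_le_add hj
    (Finset.sum_le_sum fun i hi => hedge i (Finset.mem_erase.mp hi).1)

end Main

/-- The set of sum rates of pairwise-valid rate assignments has a least element,
and it equals the minimum tree cost over all roots and arborescences. -/
theorem minSumRate_eq_minArborescenceCost
    {Ω S : Type*} [MeasurableSpace Ω] [MeasurableSpace S] [MeasurableSingletonClass S]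
    (μ : Measure Ω) [IsProbabilityMeasure μ] {n : ℕ} (hn : 1 ≤ n)
    (X : Fin n → Ω → S) (hX : ∀ i, Measurable (X i))
    (hfin : ∀ i, (Set.range (X i)).Finite) :
    ∃ m : ℝ,
      IsLeast {s : ℝ | ∃ R : Fin n → ℝ, PairwiseProperty μ X R ∧ s = ∑ i, R i} m ∧
      IsLeast {c : ℝ | ∃ (j : Fin n) (p : Fin n → Fin n),
        IsArborescence j p ∧ c = treeCost μ X j p} m := by
  classical
  set P : Finset (Fin n × (Fin n → Fin n)) :=
    Finset.univ.filter (fun q => IsArborescence q.1 q.2) with hP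
  have hPne : P.Nonempty := by
    refine ⟨(⟨0, hn⟩, fun _ => ⟨0, hn⟩), ?_⟩
    simp only [hP, Finset.mem_filter, Finset.mem_univ, true_and]
    intro i; exact ⟨1, rfl⟩
  obtain ⟨q0, hq0P, hq0min⟩ := Finset.exists_min_image P (fun q => treeCost μ X q.1 q.2) hPne
  have hq0arb : IsArborescence q0.1 q0.2 := by
    have := Finset.mem_filter.mp (hP ▸ hq0P)
    exact this.2
  refine ⟨treeCost μ X q0.1 q0.2, ⟨⟨treeRate μ X q0.1 q0.2,
      pairwise_treeRate μ X hX hq0arb, (sum_treeRate μ X q0.1 q0.2).symm⟩, ?_⟩,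
    ⟨⟨q0.1, q0.2, hq0arb, rfl⟩, ?_⟩⟩
  · rintro s ⟨R, hRp, rfl⟩
    obtain ⟨j, p, harb, hle⟩ := exists_arb_le μ hn X hX hfin R hRp
    exact le_trans (hq0min (j, p) (Finset.mem_filter.mpr ⟨Finset.mem_univ _, harb⟩)) hle
  · rintro c ⟨j, p, harb, rfl⟩
    exact hq0min (j, p) (Finset.mem_filter.mpr ⟨Finset.mem_univ _, harb⟩)
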